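/- Under the same cell-problem setup, the matrix B^{(w)} with entries b_{ij} = ∫_{Y_f} W^{(i)}·e^j dy is positive semidefinite, and for every ξ ∈ ℝ³, ∑_{i,j} b_{ij} ξ_i ξ_j = μ₁ ∫_{Y_f} |D(y, W(ξ))|² dy where W(ξ) = ∑_i ξ_i W^{(i)}. Moreover if ξ ≠ 0 then ∑_{i,j} b_{ij} ξ_i ξ_j > 0, i.e. B^{(w)} is strictly positive definite. -/

import Mathlib

open MeasureTheory Real

noncomputable section

def normSq (v : Fin 3 → ℝ) : ℝ := ∑ i, (v i) ^ 2

def symGrad (w : (Fin 3 → ℝ) → (Fin 3 → ℝ)) (y : Fin 3 → ℝ) (i j : Fin 3) : ℝ :=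
  (fderiv ℝ w y (Pi.single i 1) j + fderiv ℝ w y (Pi.single j 1) i) / 2

def symGradInner (w v : (Fin 3 → ℝ) → (Fin 3 → ℝ)) (y : Fin 3 → ℝ) : ℝ :=
  ∑ i, ∑ j, symGrad w y i j * symGrad v y i j

def symGradNormSq (w : (Fin 3 → ℝ) → (Fin 3 → ℝ)) (y : Fin 3 → ℝ) : ℝ :=
  ∑ i, ∑ j, (symGrad w y i j) ^ 2

def Yf (r : ℝ) : Set (Fin 3 → ℝ) :=
  {y | (∀ i, -(1 / 2 : ℝ) < y i ∧ y i < 1 / 2) ∧ r ^ 2 < normSq y}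

def YPeriodicV (w : (Fin 3 → ℝ) → (Fin 3 → ℝ)) : Prop :=
  ∀ y : Fin 3 → ℝ, ∀ k : Fin 3 → ℤ, w (fun i => y i + (k i : ℝ)) = w y

def divFree (w : (Fin 3 → ℝ) → (Fin 3 → ℝ)) : Prop :=
  ∀ y, ∑ i, fderiv ℝ w y (Pi.single i 1) i = 0

def CellAdmissible (r : ℝ) (φ : (Fin 3 → ℝ) → (Fin 3 → ℝ)) : Prop :=
  ContDiff ℝ 1 φ ∧ YPeriodicV φ ∧ divFree φ ∧ ∀ y, normSq y = r ^ 2 → φ y = 0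


def qfun (t : ℝ) : ℝ := t * max t 0

lemma qfun_nonneg (t : ℝ) : 0 ≤ qfun t := by
  rcases le_or_gt t 0 with h | h
  · simp [qfun, max_eq_right h]
  · have h' : max t 0 = t := max_eq_left h.le
    simp only [qfun, h']
    positivity

lemma qfun_of_nonpos {t : ℝ} (h : t ≤ 0) : qfun t = 0 := by
  simp [qfun, max_eq_right h]

lemma qfun_pos {t : ℝ} (h : 0 < t) : 0 < qfun t := by
  simp only [qfun, max_eq_left h.le]
  exact mul_pos h h

lemma qfun_hasDerivAt (t : ℝ) : HasDerivAt qfun (2 * max t 0) t := by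
  rcases lt_trichotomy t 0 with h | h | h
  · have hev : qfun =ᶠ[nhds t] fun _ => (0:ℝ) := by
      filter_upwards [Iio_mem_nhds h] with x hx
      exact qfun_of_nonpos (le_of_lt hx)
    have h0 : HasDerivAt (fun _ : ℝ => (0:ℝ)) 0 t := hasDerivAt_const t 0
    have := h0.congr_of_eventuallyEq hev
    simpa [max_eq_right h.le] using this
  · subst h
    have hmax : ∀ x : ℝ, |max x 0| ≤ |x| := by
      intro x
      rcases le_or_gt x 0 with hx0 | hx0
      · simp [max_eq_right hx0]
      · simp [max_eq_left hx0.le]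
    have key : (fun x : ℝ => qfun x) =o[nhds 0] fun x => x := by
      rw [Asymptotics.isLittleO_iff]
      intro c hc
      have hmem : Set.Icc (-c) c ∈ nhds (0:ℝ) := Icc_mem_nhds (by linarith) hc
      filter_upwards [hmem] with x hx
      have hxc : |x| ≤ c := abs_le.mpr ⟨hx.1, hx.2⟩
      calc ‖qfun x‖ = |x| * |max x 0| := by rw [Real.norm_eq_abs, qfun, abs_mul]
        _ ≤ |x| * |x| := mul_le_mul_of_nonneg_left (hmax x) (abs_nonneg x)
        _ ≤ c * ‖x‖ := mul_le_mul_of_nonneg_right hxc (abs_nonneg x)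
    have h0 : HasDerivAt qfun 0 0 := by
      rw [hasDerivAt_iff_isLittleO]
      simpa [qfun] using key
    simpa using h0
  · have hev : qfun =ᶠ[nhds t] fun x => x * x := by
      filter_upwards [Ioi_mem_nhds h] with x hx
      simp [qfun, max_eq_left (le_of_lt (Set.mem_Ioi.mp hx))]
    have h0 : HasDerivAt (fun x : ℝ => x * x) (1 * t + t * 1) t :=
      (hasDerivAt_id t).mul (hasDerivAt_id t)
    have := h0.congr_of_eventuallyEq hev
    have h2 : (1 : ℝ) * t + t * 1 = 2 * max t 0 := by
      rw [max_eq_left h.le]; ring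
    rwa [h2] at this

lemma qfun_contDiff : ContDiff ℝ 1 qfun := by
  rw [contDiff_one_iff_deriv]
  refine ⟨fun t => (qfun_hasDerivAt t).differentiableAt, ?_⟩
  have hd : deriv qfun = fun t => 2 * max t 0 :=
    funext fun t => (qfun_hasDerivAt t).deriv
  rw [hd]
  exact continuous_const.mul (continuous_id.max continuous_const)


/-! ### the test field -/

def sCLM (k : Fin 3) : ℝ →L[ℝ] (Fin 3 → ℝ) :=
  ContinuousLinearMap.pi (fun i => if i = k then ContinuousLinearMap.id ℝ ℝ else 0)

lemma sCLM_apply (k i : Fin 3) (c : ℝ) : sCLM k c i = if i = k then c else 0 := by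
  simp only [sCLM, ContinuousLinearMap.pi_apply]
  split <;> simp

def pCLM (k : Fin 3) : (Fin 3 → ℝ) →L[ℝ] ℝ × ℝ :=
  (ContinuousLinearMap.proj (k+1)).prod (ContinuousLinearMap.proj (k+2))

lemma pCLM_apply (k : Fin 3) (y : Fin 3 → ℝ) : pCLM k y = (y (k+1), y (k+2)) := rfl

def hfun (r : ℝ) (p : ℝ × ℝ) : ℝ :=
  qfun (2 * Real.cos (2*π*r) - Real.cos (2*π*p.1) - Real.cos (2*π*p.2))

lemma hfun_contDiff (r : ℝ) : ContDiff ℝ 1 (hfun r) := by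
  apply qfun_contDiff.comp
  apply ContDiff.sub
  apply ContDiff.sub contDiff_const
  · exact (Real.contDiff_cos.comp (contDiff_const.mul contDiff_fst)).of_le le_top
  · exact (Real.contDiff_cos.comp (contDiff_const.mul contDiff_snd)).of_le le_top

def wfun (r : ℝ) (k : Fin 3) (y : Fin 3 → ℝ) : ℝ := hfun r (pCLM k y)

lemma wfun_contDiff (r : ℝ) (k : Fin 3) : ContDiff ℝ 1 (wfun r k) :=
  (hfun_contDiff r).comp (pCLM k).contDiff

def testφ (r : ℝ) (k : Fin 3) (y : Fin 3 → ℝ) : Fin 3 → ℝ := sCLM k (wfun r k y)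

lemma fin3_facts : ∀ k : Fin 3, k + 1 ≠ k ∧ k + 2 ≠ k := by decide

lemma testφ_contDiff (r : ℝ) (k : Fin 3) : ContDiff ℝ 1 (testφ r k) :=
  (sCLM k).contDiff.comp (wfun_contDiff r k)

lemma wfun_periodic (r : ℝ) (k : Fin 3) : ∀ (y : Fin 3 → ℝ) (m : Fin 3 → ℤ),
    wfun r k (fun i => y i + (m i : ℝ)) = wfun r k y := by
  intro y m
  have hco : ∀ j : Fin 3, Real.cos (2*π*(y j + (m j : ℝ))) = Real.cos (2*π*(y j)) := by
    intro j
    have : 2*π*(y j + (m j : ℝ)) = 2*π*(y j) + (m j : ℝ) * (2 * π) := by ring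
    rw [this, Real.cos_add_int_mul_two_pi]
  simp only [wfun, hfun, pCLM_apply]
  rw [hco, hco]

lemma testφ_periodic (r : ℝ) (k : Fin 3) : YPeriodicV (testφ r k) := by
  intro y m
  simp only [testφ, wfun_periodic r k y m]

lemma testφ_divFree (r : ℝ) (k : Fin 3) : divFree (testφ r k) := by
  intro y
  have hD : DifferentiableAt ℝ (hfun r) (pCLM k y) :=
    ((hfun_contDiff r).differentiable one_ne_zero).differentiableAt
  set Dh : (ℝ × ℝ) →L[ℝ] ℝ := fderiv ℝ (hfun r) (pCLM k y) with hDh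
  have hw : HasFDerivAt (wfun r k) (Dh.comp (pCLM k)) y :=
    (hD.hasFDerivAt).comp y (pCLM k).hasFDerivAt
  have hφ : HasFDerivAt (testφ r k) ((sCLM k).comp (Dh.comp (pCLM k))) y :=
    ((sCLM k).hasFDerivAt).comp y hw
  rw [show fderiv ℝ (testφ r k) y = (sCLM k).comp (Dh.comp (pCLM k)) from hφ.fderiv]
  have hterm : ∀ i : Fin 3,
      ((sCLM k).comp (Dh.comp (pCLM k))) (Pi.single i 1) i
        = if i = k then Dh (pCLM k (Pi.single i 1)) else 0 := by
    intro i
    simp only [ContinuousLinearMap.comp_apply, sCLM_apply]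
  simp only [hterm]
  rw [Finset.sum_ite_eq' Finset.univ k (fun i => Dh (pCLM k (Pi.single i 1)))]
  simp only [Finset.mem_univ, if_true]
  have h1 : pCLM k (Pi.single k 1) = (0, 0) := by
    rw [pCLM_apply]
    rw [Pi.single_eq_of_ne (fin3_facts k).1, Pi.single_eq_of_ne (fin3_facts k).2]
  rw [h1, show ((0,0) : ℝ × ℝ) = 0 from rfl, map_zero]

lemma testφ_sphere (r : ℝ) (hr : 0 < r) (hr' : r < 1/2) (k : Fin 3) :
    ∀ y, normSq y = r ^ 2 → testφ r k y = 0 := by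
  intro y hy
  have habs : ∀ j : Fin 3, |y j| ≤ r := by
    intro j
    have h1 : (y j) ^ 2 ≤ r ^ 2 := by
      rw [← hy]
      exact Finset.single_le_sum (f := fun i => (y i)^2) (fun i _ => sq_nonneg _) (Finset.mem_univ j)
    nlinarith [abs_nonneg (y j), sq_abs (y j)]
  have hcos : ∀ j : Fin 3, Real.cos (2*π*r) ≤ Real.cos (2*π*(y j)) := by
    intro j
    have h2 : Real.cos (2*π*(y j)) = Real.cos (2*π*|y j|) := by
      rw [show 2*π*|y j| = |2*π*(y j)| by
        rw [abs_mul, abs_of_pos (by positivity : (0:ℝ) < 2*π)]]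
      rw [Real.cos_abs]
    rw [h2]
    apply Real.cos_le_cos_of_nonneg_of_le_pi
    · positivity
    · nlinarith [Real.pi_pos]
    · nlinarith [Real.pi_pos, habs j]
  have harg : 2 * Real.cos (2*π*r) - Real.cos (2*π*(y (k+1))) - Real.cos (2*π*(y (k+2))) ≤ 0 := by
    have := hcos (k+1); have := hcos (k+2); linarith
  have : wfun r k y = 0 := by
    simp only [wfun, hfun, pCLM_apply]
    exact qfun_of_nonpos harg
  simp only [testφ, this, map_zero]

lemma testφ_admissible (r : ℝ) (hr : 0 < r) (hr' : r < 1/2) (k : Fin 3) :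
    CellAdmissible r (testφ r k) :=
  ⟨testφ_contDiff r k, testφ_periodic r k, testφ_divFree r k, testφ_sphere r hr hr' k⟩


lemma continuous_normSq : Continuous normSq := by
  unfold normSq
  exact continuous_finset_sum _ fun i _ => (continuous_apply i).pow 2

lemma Yf_isOpen (r : ℝ) : IsOpen (Yf r) := by
  have h1 : Yf r = (⋂ i : Fin 3, ((fun y : Fin 3 → ℝ => y i) ⁻¹' Set.Ioo (-(1/2)) (1/2)))
      ∩ normSq ⁻¹' Set.Ioi (r ^ 2) := by
    ext y
    simp [Yf, Set.mem_iInter, Set.mem_Ioo, forall_and]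
  rw [h1]
  exact (isOpen_iInter_of_finite fun i =>
    (isOpen_Ioo).preimage (continuous_apply i)).inter (isOpen_Ioi.preimage continuous_normSq)

lemma Yf_measurableSet (r : ℝ) : MeasurableSet (Yf r) := (Yf_isOpen r).measurableSet

lemma Yf_subset_Icc (r : ℝ) :
    Yf r ⊆ Set.Icc (fun _ => -(1/2 : ℝ)) (fun _ => (1/2 : ℝ)) := by
  intro y hy
  refine ⟨fun i => (hy.1 i).1.le, fun i => (hy.1 i).2.le⟩

lemma integrableOn_Yf {f : (Fin 3 → ℝ) → ℝ} (hf : Continuous f) (r : ℝ) :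
    IntegrableOn f (Yf r) := by
  have h1 : IntegrableOn f (Set.Icc (fun _ => -(1/2 : ℝ)) (fun _ => (1/2 : ℝ))) :=
    hf.continuousOn.integrableOn_compact isCompact_Icc
  exact h1.mono_set (Yf_subset_Icc r)

lemma wfun_integral_pos (r : ℝ) (hr : 0 < r) (hr' : r < 1/2) (k : Fin 3) :
    0 < ∫ y in Yf r, wfun r k y := by
  have hcont : Continuous (wfun r k) := (wfun_contDiff r k).continuous
  have hnn : 0 ≤ᵐ[volume.restrict (Yf r)] wfun r k :=
    Filter.Eventually.of_forall fun y => qfun_nonneg _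
  rw [setIntegral_pos_iff_support_of_nonneg_ae hnn (integrableOn_Yf hcont r)]
  -- the witness point
  set t : ℝ := (r + 1/2)/2 with ht
  have htr : r < t := by rw [ht]; linarith
  have ht2 : t < 1/2 := by rw [ht]; linarith
  have ht0 : 0 < t := lt_trans hr htr
  set y₀ : Fin 3 → ℝ := fun _ => t with hy₀
  have hy₀Yf : y₀ ∈ Yf r := by
    constructor
    · intro i; constructor <;> [linarith; exact ht2]
    · have : normSq y₀ = 3 * t^2 := by
        simp [normSq, hy₀, Finset.sum_const]
        try ring
      rw [this]; nlinarith
  have hw₀ : 0 < wfun r k y₀ := by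
    have hclt : Real.cos (2*π*t) < Real.cos (2*π*r) := by
      apply Real.cos_lt_cos_of_nonneg_of_le_pi
      · positivity
      · nlinarith [Real.pi_pos]
      · nlinarith [Real.pi_pos]
    have : wfun r k y₀ = qfun (2 * Real.cos (2*π*r) - Real.cos (2*π*t) - Real.cos (2*π*t)) := by
      simp only [wfun, hfun, pCLM_apply, hy₀]
    rw [this]
    apply qfun_pos
    linarith
  -- the open set where wfun > 0 intersect Yf
  have hU : IsOpen ((wfun r k) ⁻¹' Set.Ioi 0 ∩ Yf r) :=
    ((isOpen_Ioi).preimage hcont).inter (Yf_isOpen r)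
  have hUsub : (wfun r k) ⁻¹' Set.Ioi 0 ∩ Yf r ⊆ Function.support (wfun r k) ∩ Yf r := by
    intro y hy
    exact ⟨ne_of_gt hy.1, hy.2⟩
  have hUne : ((wfun r k) ⁻¹' Set.Ioi 0 ∩ Yf r).Nonempty := ⟨y₀, hw₀, hy₀Yf⟩
  calc (0:ENNReal) < volume ((wfun r k) ⁻¹' Set.Ioi 0 ∩ Yf r) := hU.measure_pos volume hUne
    _ ≤ volume (Function.support (wfun r k) ∩ Yf r) := measure_mono hUsub


/-! ### continuity of symGrad entries -/

lemma continuous_symGrad_entry {w : (Fin 3 → ℝ) → (Fin 3 → ℝ)} (hw : ContDiff ℝ 1 w)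
    (i j : Fin 3) : Continuous fun y => symGrad w y i j := by
  have hf : Continuous (fderiv ℝ w) := hw.continuous_fderiv one_ne_zero
  have h1 : ∀ (v : Fin 3 → ℝ) (l : Fin 3), Continuous fun y => fderiv ℝ w y v l := by
    intro v l
    exact (continuous_apply l).comp (hf.clm_apply continuous_const)
  exact ((h1 (Pi.single i 1) j).add (h1 (Pi.single j 1) i)).div_const 2

lemma continuous_symGradInner {w v : (Fin 3 → ℝ) → (Fin 3 → ℝ)}
    (hw : ContDiff ℝ 1 w) (hv : ContDiff ℝ 1 v) : Continuous (symGradInner w v) := by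
  unfold symGradInner
  exact continuous_finset_sum _ fun i _ => continuous_finset_sum _ fun j _ =>
    (continuous_symGrad_entry hw i j).mul (continuous_symGrad_entry hv i j)

lemma continuous_symGradNormSq {w : (Fin 3 → ℝ) → (Fin 3 → ℝ)} (hw : ContDiff ℝ 1 w) :
    Continuous (symGradNormSq w) := by
  unfold symGradNormSq
  exact continuous_finset_sum _ fun i _ => continuous_finset_sum _ fun j _ =>
    (continuous_symGrad_entry hw i j).pow 2

/-! ### linearity of symGrad -/

lemma symGrad_lincomb {W : Fin 3 → (Fin 3 → ℝ) → (Fin 3 → ℝ)}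
    (hW : ∀ i, ContDiff ℝ 1 (W i)) (ξ : Fin 3 → ℝ) (y : Fin 3 → ℝ) (m n : Fin 3) :
    symGrad (fun y => ∑ i, ξ i • W i y) y m n = ∑ i, ξ i * symGrad (W i) y m n := by
  have hfd : fderiv ℝ (fun y => ∑ i, ξ i • W i y) y = ∑ i, ξ i • fderiv ℝ (W i) y := by
    have h : HasFDerivAt (fun y => ∑ i : Fin 3, ξ i • W i y)
        (∑ i : Fin 3, ξ i • fderiv ℝ (W i) y) y := by
      apply HasFDerivAt.fun_sum
      intro i _
      exact (((hW i).differentiable one_ne_zero) y).hasFDerivAt.const_smul (ξ i)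
    exact h.fderiv
  simp only [symGrad, hfd, ContinuousLinearMap.sum_apply, ContinuousLinearMap.smul_apply,
    Finset.sum_apply, Pi.smul_apply, smul_eq_mul]
  rw [← Finset.sum_add_distrib, Finset.sum_div]
  exact Finset.sum_congr rfl fun i _ => by ring

/-! ### sum swaps -/

lemma sum_swap4 (f : Fin 3 → Fin 3 → Fin 3 → Fin 3 → ℝ) :
    ∑ m, ∑ n, ∑ i, ∑ j, f m n i j = ∑ i, ∑ j, ∑ m, ∑ n, f m n i j := by
  calc ∑ m, ∑ n, ∑ i, ∑ j, f m n i j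
      = ∑ m, ∑ i, ∑ n, ∑ j, f m n i j :=
        Finset.sum_congr rfl fun m _ => Finset.sum_comm
    _ = ∑ i, ∑ m, ∑ n, ∑ j, f m n i j := Finset.sum_comm
    _ = ∑ i, ∑ m, ∑ j, ∑ n, f m n i j :=
        Finset.sum_congr rfl fun i _ => Finset.sum_congr rfl fun m _ => Finset.sum_comm
    _ = ∑ i, ∑ j, ∑ m, ∑ n, f m n i j :=
        Finset.sum_congr rfl fun i _ => Finset.sum_comm

lemma sum_swap3 (f : Fin 3 → Fin 3 → Fin 3 → ℝ) :
    ∑ m, ∑ n, ∑ i, f m n i = ∑ i, ∑ m, ∑ n, f m n i := by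
  calc ∑ m, ∑ n, ∑ i, f m n i
      = ∑ m, ∑ i, ∑ n, f m n i := Finset.sum_congr rfl fun m _ => Finset.sum_comm
    _ = ∑ i, ∑ m, ∑ n, f m n i := Finset.sum_comm

/-! ### pointwise expansions -/

lemma symGradNormSq_expand {W : Fin 3 → (Fin 3 → ℝ) → (Fin 3 → ℝ)}
    (hW : ∀ i, ContDiff ℝ 1 (W i)) (ξ : Fin 3 → ℝ) (y : Fin 3 → ℝ) :
    symGradNormSq (fun y => ∑ i, ξ i • W i y) y
      = ∑ i, ∑ j, ξ i * ξ j * symGradInner (W i) (W j) y := by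
  have hsg := symGrad_lincomb hW ξ y
  calc symGradNormSq (fun y => ∑ i, ξ i • W i y) y
      = ∑ m, ∑ n, ∑ i, ∑ j,
          (ξ i * symGrad (W i) y m n) * (ξ j * symGrad (W j) y m n) := by
        simp only [symGradNormSq, hsg, pow_two, Finset.sum_mul_sum]
    _ = ∑ i, ∑ j, ∑ m, ∑ n,
          (ξ i * symGrad (W i) y m n) * (ξ j * symGrad (W j) y m n) := sum_swap4 _
    _ = ∑ i, ∑ j, ξ i * ξ j * symGradInner (W i) (W j) y := by
        refine Finset.sum_congr rfl fun i _ => Finset.sum_congr rfl fun j _ => ?_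
        simp only [symGradInner, Finset.mul_sum]
        exact Finset.sum_congr rfl fun m _ => Finset.sum_congr rfl fun n _ => by ring

lemma symGradInner_lincomb {W : Fin 3 → (Fin 3 → ℝ) → (Fin 3 → ℝ)}
    (hW : ∀ i, ContDiff ℝ 1 (W i)) (ξ : Fin 3 → ℝ)
    (φ : (Fin 3 → ℝ) → (Fin 3 → ℝ)) (y : Fin 3 → ℝ) :
    symGradInner (fun y => ∑ i, ξ i • W i y) φ y
      = ∑ i, ξ i * symGradInner (W i) φ y := by
  have hsg := symGrad_lincomb hW ξ y
  calc symGradInner (fun y => ∑ i, ξ i • W i y) φ y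
      = ∑ m, ∑ n, ∑ i, (ξ i * symGrad (W i) y m n) * symGrad φ y m n := by
        simp only [symGradInner, hsg, Finset.sum_mul]
    _ = ∑ i, ∑ m, ∑ n, (ξ i * symGrad (W i) y m n) * symGrad φ y m n := sum_swap3 _
    _ = ∑ i, ξ i * symGradInner (W i) φ y := by
        refine Finset.sum_congr rfl fun i _ => ?_
        simp only [symGradInner, Finset.mul_sum]
        exact Finset.sum_congr rfl fun m _ => Finset.sum_congr rfl fun n _ => by ring

lemma symGradInner_symm (w v : (Fin 3 → ℝ) → (Fin 3 → ℝ)) (y : Fin 3 → ℝ) :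
    symGradInner w v y = symGradInner v w y := by
  simp only [symGradInner]
  exact Finset.sum_congr rfl fun i _ => Finset.sum_congr rfl fun j _ => mul_comm _ _


/-- Strict positive definiteness of the permeability matrix B^{(w)}: with
b_{ij} = ∫_{Y_f} W^{(i)}·e^j dy one has ∑ b_{ij} ξ_i ξ_j = μ₁ ∫ |D(y,W(ξ))|² dy ≥ 0 for
W(ξ) = ∑ ξ_i W^{(i)}, and ∑ b_{ij} ξ_i ξ_j > 0 for ξ ≠ 0. -/
theorem stmt_6 (r μ₁ : ℝ) (hr : 0 < r) (hr' : r < 1 / 2) (hμ : 0 < μ₁)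
    (W : Fin 3 → (Fin 3 → ℝ) → (Fin 3 → ℝ))
    (hadm : ∀ i, CellAdmissible r (W i))
    (hweak : ∀ i, ∀ φ, CellAdmissible r φ →
      μ₁ * ∫ y in Yf r, symGradInner (W i) φ y = ∫ y in Yf r, φ y i) :
    (∀ ξ : Fin 3 → ℝ,
      ∑ i, ∑ j, (∫ y in Yf r, W i y j) * ξ i * ξ j =
        μ₁ * ∫ y in Yf r, symGradNormSq (fun y => ∑ i, ξ i • W i y) y) ∧
    (∀ ξ : Fin 3 → ℝ, 0 ≤ ∑ i, ∑ j, (∫ y in Yf r, W i y j) * ξ i * ξ j) ∧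
    (∀ ξ : Fin 3 → ℝ, ξ ≠ 0 → 0 < ∑ i, ∑ j, (∫ y in Yf r, W i y j) * ξ i * ξ j) := by
  have hWd : ∀ i, ContDiff ℝ 1 (W i) := fun i => (hadm i).1
  have hInnerCont : ∀ i j, Continuous (symGradInner (W i) (W j)) :=
    fun i j => continuous_symGradInner (hWd i) (hWd j)
  -- b i j = μ₁ * ∫ inner (W i) (W j)
  have hb : ∀ i j, (∫ y in Yf r, W i y j)
      = μ₁ * ∫ y in Yf r, symGradInner (W i) (W j) y := by
    intro i j
    have h1 := hweak j (W i) (hadm i)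
    have h2 : (∫ y in Yf r, symGradInner (W j) (W i) y)
        = ∫ y in Yf r, symGradInner (W i) (W j) y := by
      simp only [symGradInner_symm (W j) (W i)]
    rw [← h1, h2]
  -- the key identity
  have key : ∀ ξ : Fin 3 → ℝ,
      ∑ i, ∑ j, (∫ y in Yf r, W i y j) * ξ i * ξ j =
        μ₁ * ∫ y in Yf r, symGradNormSq (fun y => ∑ i, ξ i • W i y) y := by
    intro ξ
    have hexp := symGradNormSq_expand hWd ξ
    have hi1 : ∀ i j : Fin 3, Integrable
        (fun y => ξ i * ξ j * symGradInner (W i) (W j) y) (volume.restrict (Yf r)) :=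
      fun i j => (integrableOn_Yf ((continuous_const.mul (hInnerCont i j))) r)
    calc ∑ i, ∑ j, (∫ y in Yf r, W i y j) * ξ i * ξ j
        = ∑ i, ∑ j, μ₁ * (ξ i * ξ j * ∫ y in Yf r, symGradInner (W i) (W j) y) := by
          refine Finset.sum_congr rfl fun i _ => Finset.sum_congr rfl fun j _ => ?_
          rw [hb i j]; ring
      _ = μ₁ * ∑ i, ∑ j, ξ i * ξ j * ∫ y in Yf r, symGradInner (W i) (W j) y := by
          rw [Finset.mul_sum]
          exact Finset.sum_congr rfl fun i _ => by rw [Finset.mul_sum]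
      _ = μ₁ * ∑ i, ∑ j, ∫ y in Yf r, ξ i * ξ j * symGradInner (W i) (W j) y := by
          congr 1
          exact Finset.sum_congr rfl fun i _ => Finset.sum_congr rfl fun j _ =>
            (integral_const_mul _ _).symm
      _ = μ₁ * ∑ i, ∫ y in Yf r, ∑ j, ξ i * ξ j * symGradInner (W i) (W j) y := by
          congr 1
          exact Finset.sum_congr rfl fun i _ =>
            (integral_finset_sum _ (fun j _ => hi1 i j)).symm
      _ = μ₁ * ∫ y in Yf r, ∑ i, ∑ j, ξ i * ξ j * symGradInner (W i) (W j) y := by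
          congr 1
          exact (integral_finset_sum _ (fun i _ =>
            integrable_finset_sum _ (fun j _ => hi1 i j))).symm
      _ = μ₁ * ∫ y in Yf r, symGradNormSq (fun y => ∑ i, ξ i • W i y) y := by
          congr 1
          exact setIntegral_congr_fun (Yf_measurableSet r) (fun y _ => (hexp y).symm)
  have hge : ∀ ξ : Fin 3 → ℝ, 0 ≤ ∑ i, ∑ j, (∫ y in Yf r, W i y j) * ξ i * ξ j := by
    intro ξ
    rw [key ξ]
    apply mul_nonneg hμ.le
    apply setIntegral_nonneg (Yf_measurableSet r)
    intro y _
    exact Finset.sum_nonneg fun i _ => Finset.sum_nonneg fun j _ => sq_nonneg _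
  refine ⟨key, hge, ?_⟩
  · -- strict positivity
    intro ξ hξ
    obtain ⟨k, hk⟩ := Function.ne_iff.mp hξ
    have hk' : ξ k ≠ 0 := hk
    rcases lt_or_eq_of_le (hge ξ) with h | h
    · exact h
    exfalso
    -- ∫ symGradNormSq Wξ = 0
    have hWξ : ContDiff ℝ 1 (fun y => ∑ i, ξ i • W i y) :=
      ContDiff.sum fun i _ => (hWd i).const_smul (ξ i)
    have hint0 : (∫ y in Yf r, symGradNormSq (fun y => ∑ i, ξ i • W i y) y) = 0 := by
      have := key ξ
      rw [← h] at this
      have := this.symm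
      rcases mul_eq_zero.mp this with h' | h'
      · exact absurd h' hμ.ne'
      · exact h'
    -- a.e. vanishing of the symmetric gradient norm
    have hae : (fun y => symGradNormSq (fun y => ∑ i, ξ i • W i y) y)
        =ᵐ[volume.restrict (Yf r)] 0 := by
      rw [← integral_eq_zero_iff_of_nonneg_ae]
      · exact hint0
      · exact Filter.Eventually.of_forall fun y =>
          Finset.sum_nonneg fun i _ => Finset.sum_nonneg fun j _ => sq_nonneg _
      · exact integrableOn_Yf (continuous_symGradNormSq hWξ) r
    -- hence for any φ, ∫ symGradInner Wξ φ = 0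
    have hcross : ∀ φ : (Fin 3 → ℝ) → (Fin 3 → ℝ),
        (∫ y in Yf r, symGradInner (fun y => ∑ i, ξ i • W i y) φ y) = 0 := by
      intro φ
      have h0 : (fun y => symGradInner (fun y => ∑ i, ξ i • W i y) φ y)
          =ᵐ[volume.restrict (Yf r)] 0 := by
        refine hae.mono fun y hy => ?_
        have hy' : ∑ m, ∑ n, (symGrad (fun y => ∑ i, ξ i • W i y) y m n) ^ 2 = 0 := hy
        have hz : ∀ m n : Fin 3, symGrad (fun y => ∑ i, ξ i • W i y) y m n = 0 := by
          intro m n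
          have h1 := (Finset.sum_eq_zero_iff_of_nonneg
            (fun m _ => Finset.sum_nonneg fun n _ => sq_nonneg _)).mp hy' m (Finset.mem_univ m)
          have h2 := (Finset.sum_eq_zero_iff_of_nonneg
            (fun n _ => sq_nonneg _)).mp h1 n (Finset.mem_univ n)
          exact sq_eq_zero_iff.mp h2
        show symGradInner _ φ y = 0
        simp only [symGradInner]
        exact Finset.sum_eq_zero fun m _ => Finset.sum_eq_zero fun n _ => by
          rw [hz m n, zero_mul]
      exact integral_eq_zero_of_ae h0
    -- the weak formulation summed against ξ
    have hφadm := testφ_admissible r hr (by linarith : r < 1/2) k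
    have hφc : ContDiff ℝ 1 (testφ r k) := hφadm.1
    have hsum : μ₁ * ∫ y in Yf r, symGradInner (fun y => ∑ i, ξ i • W i y) (testφ r k) y
        = ∑ i, ξ i * ∫ y in Yf r, testφ r k y i := by
      have hInt : ∀ i : Fin 3, Integrable
          (fun y => ξ i * symGradInner (W i) (testφ r k) y) (volume.restrict (Yf r)) :=
        fun i => integrableOn_Yf
          (continuous_const.mul (continuous_symGradInner (hWd i) hφc)) r
      calc μ₁ * ∫ y in Yf r, symGradInner (fun y => ∑ i, ξ i • W i y) (testφ r k) y
          = μ₁ * ∫ y in Yf r, ∑ i, ξ i * symGradInner (W i) (testφ r k) y := by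
            congr 1
            exact setIntegral_congr_fun (Yf_measurableSet r)
              (fun y _ => symGradInner_lincomb hWd ξ (testφ r k) y)
        _ = μ₁ * ∑ i, ∫ y in Yf r, ξ i * symGradInner (W i) (testφ r k) y := by
            congr 1
            exact integral_finset_sum _ (fun i _ => hInt i)
        _ = ∑ i, ξ i * (μ₁ * ∫ y in Yf r, symGradInner (W i) (testφ r k) y) := by
            rw [Finset.mul_sum]
            exact Finset.sum_congr rfl fun i _ => by
              rw [integral_const_mul]; ring
        _ = ∑ i, ξ i * ∫ y in Yf r, testφ r k y i :=
            Finset.sum_congr rfl fun i _ => by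
              rw [hweak i (testφ r k) hφadm]
    rw [hcross (testφ r k), mul_zero] at hsum
    -- compute the right-hand side
    have hrhs : ∑ i, ξ i * ∫ y in Yf r, testφ r k y i
        = ξ k * ∫ y in Yf r, wfun r k y := by
      have hcomp : ∀ i : Fin 3, (fun y => testφ r k y i)
          = fun y => if i = k then wfun r k y else 0 := by
        intro i
        funext y
        simp only [testφ, sCLM_apply]
      calc ∑ i, ξ i * ∫ y in Yf r, testφ r k y i
          = ∑ i, ξ i * ∫ y in Yf r, (if i = k then wfun r k y else 0) := by
            refine Finset.sum_congr rfl fun i _ => ?_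
            rw [show (fun y => testφ r k y i) = fun y => if i = k then wfun r k y else 0
              from hcomp i]
        _ = ∑ i, (if i = k then ξ i * ∫ y in Yf r, wfun r k y else 0) := by
            refine Finset.sum_congr rfl fun i _ => ?_
            by_cases hik : i = k <;> simp [hik]
        _ = ξ k * ∫ y in Yf r, wfun r k y := by
            rw [Finset.sum_ite_eq' Finset.univ k (fun i => ξ i * ∫ y in Yf r, wfun r k y)]
            simp
    rw [hrhs] at hsum
    have hpos := wfun_integral_pos r hr (by linarith : r < 1/2) k
    have : ξ k = 0 := by
      rcases mul_eq_zero.mp hsum.symm with h' | h'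
      · exact h'
      · exact absurd h' hpos.ne'
    exact hk' this


end
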